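/- Let N be a positive integer, let L, A : ℝ → Matrix (Fin N) (Fin N) ℝ be time-dependent matrices with L differentiable and satisfying L'(t) = [A(t), L(t)] for all t, and let α₁, α₂ be real constants. Define L_new(t) = α₁ (L(t) ⊗ L(t)) + α₂ (L(t) ⊗ I_N + I_N ⊗ L(t)) and A_new(t) = A(t) ⊗ I_N + I_N ⊗ A(t). Then L_new satisfies the Lax equation L_new'(t) = [A_new(t), L_new(t)] for all t. -/

import Mathlib

open Matrix Kronecker

theorem self_kronecker_key (N : ℕ) (A L : Matrix (Fin N) (Fin N) ℝ) (α₁ α₂ : ℝ) :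
    (A ⊗ₖ (1 : Matrix (Fin N) (Fin N) ℝ) + (1 : Matrix (Fin N) (Fin N) ℝ) ⊗ₖ A) *
      (α₁ • (L ⊗ₖ L) + α₂ • (L ⊗ₖ (1 : Matrix (Fin N) (Fin N) ℝ) +
        (1 : Matrix (Fin N) (Fin N) ℝ) ⊗ₖ L)) -
    (α₁ • (L ⊗ₖ L) + α₂ • (L ⊗ₖ (1 : Matrix (Fin N) (Fin N) ℝ) +
        (1 : Matrix (Fin N) (Fin N) ℝ) ⊗ₖ L)) *
      (A ⊗ₖ (1 : Matrix (Fin N) (Fin N) ℝ) + (1 : Matrix (Fin N) (Fin N) ℝ) ⊗ₖ A) =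
    α₁ • ((A * L - L * A) ⊗ₖ L + L ⊗ₖ (A * L - L * A)) +
    α₂ • ((A * L - L * A) ⊗ₖ (1 : Matrix (Fin N) (Fin N) ℝ) +
          (1 : Matrix (Fin N) (Fin N) ℝ) ⊗ₖ (A * L - L * A)) := by
  have ks : ∀ (X Y Z : Matrix (Fin N) (Fin N) ℝ), (X - Y) ⊗ₖ Z = X ⊗ₖ Z - Y ⊗ₖ Z := by
    intro X Y Z; ext ⟨a, b⟩ ⟨c, d⟩; simp [Matrix.kroneckerMap_apply, sub_mul]
  have sk : ∀ (X Y Z : Matrix (Fin N) (Fin N) ℝ), Z ⊗ₖ (X - Y) = Z ⊗ₖ X - Z ⊗ₖ Y := by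
    intro X Y Z; ext ⟨a, b⟩ ⟨c, d⟩; simp [Matrix.kroneckerMap_apply, mul_sub]
  simp only [Matrix.mul_add, Matrix.add_mul, Matrix.mul_smul, Matrix.smul_mul,
    ← Matrix.mul_kronecker_mul, Matrix.one_mul, Matrix.mul_one, ks, sk, smul_add, smul_sub]
  abel

/-- Self-Kronecker construction of new Lax representations: if `L' = [A, L]`, then
`L_new = α₁ (L ⊗ L) + α₂ (L ⊗ I_N + I_N ⊗ L)` satisfies `L_new' = [A_new, L_new]`
with `A_new = A ⊗ I_N + I_N ⊗ A`. -/
theorem self_kronecker_lax_representation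
    (N : ℕ) (hN : 0 < N)
    (L A : ℝ → Matrix (Fin N) (Fin N) ℝ)
    (hL : ∀ t : ℝ, ∀ i j : Fin N,
      HasDerivAt (fun s => L s i j) ((A t * L t - L t * A t) i j) t)
    (α₁ α₂ : ℝ)
    (Lnew Anew : ℝ → Matrix (Fin N × Fin N) (Fin N × Fin N) ℝ)
    (hLnew : ∀ t : ℝ, Lnew t =
      α₁ • (L t ⊗ₖ L t) +
      α₂ • (L t ⊗ₖ (1 : Matrix (Fin N) (Fin N) ℝ) +
            (1 : Matrix (Fin N) (Fin N) ℝ) ⊗ₖ L t))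
    (hAnew : ∀ t : ℝ, Anew t =
      A t ⊗ₖ (1 : Matrix (Fin N) (Fin N) ℝ) +
      (1 : Matrix (Fin N) (Fin N) ℝ) ⊗ₖ A t) :
    ∀ t : ℝ, ∀ i j : Fin N × Fin N,
      HasDerivAt (fun s => Lnew s i j) ((Anew t * Lnew t - Lnew t * Anew t) i j) t := by
  intro t i j
  have key : Anew t * Lnew t - Lnew t * Anew t =
      α₁ • ((A t * L t - L t * A t) ⊗ₖ L t + L t ⊗ₖ (A t * L t - L t * A t)) +
      α₂ • ((A t * L t - L t * A t) ⊗ₖ (1 : Matrix (Fin N) (Fin N) ℝ) +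
            (1 : Matrix (Fin N) (Fin N) ℝ) ⊗ₖ (A t * L t - L t * A t)) := by
    rw [hLnew, hAnew]; exact self_kronecker_key N (A t) (L t) α₁ α₂
  rw [key]
  have hfun : (fun s => Lnew s i j) = fun s =>
      α₁ * (L s i.1 j.1 * L s i.2 j.2) +
      α₂ * (L s i.1 j.1 * (1 : Matrix (Fin N) (Fin N) ℝ) i.2 j.2 +
            (1 : Matrix (Fin N) (Fin N) ℝ) i.1 j.1 * L s i.2 j.2) := by
    funext s
    rw [hLnew]
    simp [Matrix.kroneckerMap_apply, mul_add]
  rw [hfun]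
  have h1 := (hL t i.1 j.1).mul (hL t i.2 j.2)
  have h2 := (hL t i.1 j.1).mul_const ((1 : Matrix (Fin N) (Fin N) ℝ) i.2 j.2)
  have h3 := (hL t i.2 j.2).const_mul ((1 : Matrix (Fin N) (Fin N) ℝ) i.1 j.1)
  have hd := ((h1.const_mul α₁).add ((h2.add h3).const_mul α₂))
  convert hd using 1
  · rfl
  · rfl
  · rfl
  · simp only [Matrix.add_apply, Matrix.smul_apply, Matrix.kroneckerMap_apply, smul_eq_mul]
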